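/- Let m ≥ 0 with 2m ∈ ℤ and let λ be a nonempty partition of n whose m-tableau T_m(λ) is residual, with full jump set J. Then Σ_{j ∈ J} (2j + 1) = 2n + m² if m is an integer, and Σ_{j ∈ J} (2j + 1) = 2n + m² − 1/4 if m is a half-integer. -/

import Mathlib

open scoped Classical

/-- `lam` is a partition of `n`: a weakly decreasing, eventually-zero function
`ℕ → ℕ` recording the parts (0-indexed), whose sum of parts is `n`. -/
def IsPartitionOf (lam : ℕ → ℕ) (n : ℕ) : Prop :=
  Antitone lam ∧ ∃ N, (∀ i, N ≤ i → lam i = 0) ∧ ∑ i ∈ Finset.range N, lam i = n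

/-- The multiplicity `M_l` of the entry `l` in the `m`-tableau `T_m(λ)`:
the number of boxes `(i,j)` (0-indexed, `j < lam i`) whose entry
`|i - j + m|` equals `l`. -/
noncomputable def Mmult (lam : ℕ → ℕ) (m : ℝ) (l : ℝ) : ℕ :=
  Set.ncard {p : ℕ × ℕ | p.2 < lam p.1 ∧ |(p.1 : ℝ) - (p.2 : ℝ) + m| = l}

/-- The `m`-tableau of `lam` is residual.  The entry values range over `m + ℤ`
(that is, over `ℤ` when `m ∈ ℤ` and over `ℤ + 1/2` when `m` is a half-integer):
(i) `M_l - M_{l+1} ∈ {0,1}` for all entry-values `l > 0` with `l ≥ m`;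
(ii) `M_{l+1} - M_l ∈ {0,1}` for all entry-values `l` with `0 < l ≤ m - 1`;
(iii) when `m` is an integer, `M_0 = ⌊M_1/2⌋` if `m ≥ 1` and
`M_0 = ⌊(M_1+1)/2⌋` if `m = 0`. -/
def Residual (lam : ℕ → ℕ) (m : ℝ) : Prop :=
  (∀ l : ℝ, (∃ c : ℤ, l = m + c) → 0 < l → m ≤ l →
      Mmult lam m (l + 1) ≤ Mmult lam m l ∧
      Mmult lam m l ≤ Mmult lam m (l + 1) + 1) ∧
  (∀ l : ℝ, (∃ c : ℤ, l = m + c) → 0 < l → l ≤ m - 1 →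
      Mmult lam m l ≤ Mmult lam m (l + 1) ∧
      Mmult lam m (l + 1) ≤ Mmult lam m l + 1) ∧
  ((∃ c : ℤ, m = (c : ℝ)) →
      (m = 0 → Mmult lam m 0 = (Mmult lam m 1 + 1) / 2) ∧
      (m ≠ 0 → Mmult lam m 0 = Mmult lam m 1 / 2))

/-- The set `J⁺` of positive jumps of a residual `m`-tableau. -/
def Jpos (lam : ℕ → ℕ) (m : ℝ) : Set ℝ :=
  {l : ℝ | (∃ c : ℤ, l = m + c) ∧ 0 < l ∧
    ((m ≤ l ∧ Mmult lam m l = Mmult lam m (l + 1) + 1) ∨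
     (l ≤ m - 1 ∧ Mmult lam m l = Mmult lam m (l + 1)))}

/-- The full jump set `J`: the positive jumps together with one extra element
(`0` when `m ∈ ℤ`, `-1/2` otherwise, i.e. `m - ⌈m⌉`), added exactly when
`|J⁺| ≢ ⌈m⌉ (mod 2)`. -/
noncomputable def Jfull (lam : ℕ → ℕ) (m : ℝ) : Set ℝ :=
  if (Set.ncard (Jpos lam m) : ℤ) % 2 = ⌈m⌉ % 2 then Jpos lam m
  else insert (m - (⌈m⌉ : ℝ)) (Jpos lam m)

/-! ### Auxiliary induction lemmas -/

lemma lemA_sum (g : ℕ → ℕ) (K : ℕ)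
    (hg : ∀ t, K ≤ t → g (t+1) ≤ g t ∧ g t ≤ g (t+1) + 1) :
    ∀ N, K ≤ N →
      (∑ t ∈ Finset.Ico K N, if g t = g (t+1) + 1 then (2*(t:ℤ)+1) else 0)
        = 2 * (∑ t ∈ Finset.Ico K N, (g t : ℤ)) + (2*K-1)*(g K) - (2*N-1)*(g N) := by
  intro N
  induction N with
  | zero => intro h; interval_cases K; simp
  | succ N ih =>
    intro h
    rcases Nat.lt_or_ge K (N+1) with h' | h'
    · have hKN : K ≤ N := by omega
      rw [Finset.sum_Ico_succ_top hKN, Finset.sum_Ico_succ_top hKN, ih hKN]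
      rcases (hg N hKN) with ⟨h1, h2⟩
      by_cases hd : g N = g (N+1) + 1
      · rw [if_pos hd]
        have : (g N : ℤ) = g (N+1) + 1 := by exact_mod_cast hd
        push_cast
        rw [this]; ring
      · rw [if_neg hd]
        have : (g N : ℤ) = g (N+1) := by omega
        push_cast
        rw [this]; ring
    · have : K = N+1 := by omega
      subst this; simp

lemma lemA_card (g : ℕ → ℕ) (K : ℕ)
    (hg : ∀ t, K ≤ t → g (t+1) ≤ g t ∧ g t ≤ g (t+1) + 1) :
    ∀ N, K ≤ N →
      (∑ t ∈ Finset.Ico K N, if g t = g (t+1) + 1 then (1:ℤ) else 0)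
        = (g K : ℤ) - g N := by
  intro N
  induction N with
  | zero => intro h; interval_cases K; simp
  | succ N ih =>
    intro h
    rcases Nat.lt_or_ge K (N+1) with h' | h'
    · have hKN : K ≤ N := by omega
      rw [Finset.sum_Ico_succ_top hKN, ih hKN]
      rcases (hg N hKN) with ⟨h1, h2⟩
      by_cases hd : g N = g (N+1) + 1
      · rw [if_pos hd]
        have : (g N : ℤ) = g (N+1) + 1 := by exact_mod_cast hd
        omega
      · rw [if_neg hd]; have : g N = g (N+1) := by omega
        simp [this]
    · have : K = N+1 := by omega
      subst this; simp

lemma lemB_sum (g : ℕ → ℕ) :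
    ∀ K, (∀ t, t < K → g t ≤ g (t+1) ∧ g (t+1) ≤ g t + 1) →
      (∑ t ∈ Finset.range K, if g t = g (t+1) then (2*(t:ℤ)+1) else 0)
        = 2 * (∑ t ∈ Finset.range K, (g t : ℤ)) + K^2 - g 0 - (2*K-1)*(g K) := by
  intro K
  induction K with
  | zero => intro _; simp
  | succ K ih =>
    intro hg
    rw [Finset.sum_range_succ, Finset.sum_range_succ, ih (fun t ht => hg t (by omega))]
    rcases hg K (by omega) with ⟨h1, h2⟩
    by_cases hd : g K = g (K+1)
    · rw [if_pos hd]
      have : (g K : ℤ) = g (K+1) := by exact_mod_cast hd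
      push_cast
      rw [this]; ring
    · rw [if_neg hd]
      have : (g (K+1) : ℤ) = g K + 1 := by omega
      push_cast
      rw [this]; ring

lemma lemB_card (g : ℕ → ℕ) :
    ∀ K, (∀ t, t < K → g t ≤ g (t+1) ∧ g (t+1) ≤ g t + 1) →
      (∑ t ∈ Finset.range K, if g t = g (t+1) then (1:ℤ) else 0)
        = (K : ℤ) + g 0 - g K := by
  intro K
  induction K with
  | zero => intro _; simp
  | succ K ih =>
    intro hg
    rw [Finset.sum_range_succ, ih (fun t ht => hg t (by omega))]
    rcases hg K (by omega) with ⟨h1, h2⟩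
    by_cases hd : g K = g (K+1)
    · rw [if_pos hd]; push_cast [hd]; ring
    · rw [if_neg hd]
      have : (g (K+1) : ℤ) = g K + 1 := by omega
      push_cast; omega

/-! ### The jump finset and its sums -/

noncomputable def Sfin (g : ℕ → ℕ) (K NB : ℕ) : Finset ℕ :=
  (Finset.range NB).filter
    (fun t => (K ≤ t ∧ g t = g (t+1) + 1) ∨ (t < K ∧ g t = g (t+1)))

lemma Sfin_split (g : ℕ → ℕ) (K NB : ℕ) (hKNB : K ≤ NB) (w : ℕ → ℤ) :
    ∑ t ∈ Sfin g K NB, w t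
      = (∑ t ∈ Finset.range K, if g t = g (t+1) then w t else 0)
        + (∑ t ∈ Finset.Ico K NB, if g t = g (t+1) + 1 then w t else 0) := by
  rw [Sfin, Finset.sum_filter, Finset.range_eq_Ico,
    ← Finset.sum_Ico_consecutive _ (Nat.zero_le K) hKNB, ← Finset.range_eq_Ico]
  congr 1
  · refine Finset.sum_congr rfl fun t ht => ?_
    rw [Finset.mem_range] at ht
    exact if_congr (by omega) rfl rfl
  · refine Finset.sum_congr rfl fun t ht => ?_
    rw [Finset.mem_Ico] at ht
    exact if_congr (by omega) rfl rfl

lemma Sfin_sum (g : ℕ → ℕ) (K NB : ℕ) (hKNB : K ≤ NB)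
    (hdec : ∀ t, K ≤ t → g (t+1) ≤ g t ∧ g t ≤ g (t+1) + 1)
    (hinc : ∀ t, t < K → g t ≤ g (t+1) ∧ g (t+1) ≤ g t + 1)
    (hNB0 : g NB = 0) :
    (∑ t ∈ Sfin g K NB, (2*(t:ℤ)+1))
      = 2 * (∑ t ∈ Finset.range NB, (g t : ℤ)) + K^2 - g 0 := by
  rw [Sfin_split g K NB hKNB (fun t => 2*(t:ℤ)+1), lemB_sum g K hinc,
    lemA_sum g K hdec NB hKNB, hNB0]
  have hsplit : (∑ t ∈ Finset.range NB, (g t : ℤ))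
      = (∑ t ∈ Finset.range K, (g t : ℤ)) + ∑ t ∈ Finset.Ico K NB, (g t : ℤ) := by
    rw [Finset.range_eq_Ico, ← Finset.sum_Ico_consecutive _ (Nat.zero_le K) hKNB,
      ← Finset.range_eq_Ico]
  rw [hsplit]
  push_cast
  ring

lemma Sfin_card (g : ℕ → ℕ) (K NB : ℕ) (hKNB : K ≤ NB)
    (hdec : ∀ t, K ≤ t → g (t+1) ≤ g t ∧ g t ≤ g (t+1) + 1)
    (hinc : ∀ t, t < K → g t ≤ g (t+1) ∧ g (t+1) ≤ g t + 1)
    (hNB0 : g NB = 0) :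
    ((Sfin g K NB).card : ℤ) = K + g 0 := by
  have h : ((Sfin g K NB).card : ℤ) = ∑ t ∈ Sfin g K NB, (1:ℤ) := by
    simp
  rw [h, Sfin_split g K NB hKNB (fun _ => (1:ℤ)), lemB_card g K hinc,
    lemA_card g K hdec NB hKNB, hNB0]
  push_cast
  ring

/-! ### Boxes and fibers -/

noncomputable def Bf (lam : ℕ → ℕ) (N : ℕ) : Finset (ℕ × ℕ) :=
  (Finset.range N).biUnion (fun i => ({i} : Finset ℕ) ×ˢ Finset.range (lam i))

lemma mem_Bf (lam : ℕ → ℕ) (N : ℕ) (p : ℕ × ℕ) :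
    p ∈ Bf lam N ↔ p.1 < N ∧ p.2 < lam p.1 := by
  simp only [Bf, Finset.mem_biUnion, Finset.mem_product, Finset.mem_singleton,
    Finset.mem_range]
  constructor
  · rintro ⟨i, hi, h1, h2⟩; exact ⟨h1 ▸ hi, h1 ▸ h2⟩
  · rintro ⟨h1, h2⟩; exact ⟨p.1, h1, rfl, h2⟩

lemma card_Bf (lam : ℕ → ℕ) (N : ℕ) :
    (Bf lam N).card = ∑ i ∈ Finset.range N, lam i := by
  rw [Bf, Finset.card_biUnion]
  · refine Finset.sum_congr rfl fun i _ => ?_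
    simp
  · intro a _ b _ hab
    simp only [Finset.disjoint_left, Finset.mem_product, Finset.mem_singleton]
    rintro p ⟨h1, _⟩ ⟨h2, _⟩
    exact hab (h1 ▸ h2.symm ▸ rfl)

def vI (k : ℕ) (p : ℕ × ℕ) : ℕ := ((p.1 : ℤ) - p.2 + k).natAbs

lemma entryI (k : ℕ) (p : ℕ × ℕ) :
    |(p.1 : ℝ) - (p.2 : ℝ) + (k : ℝ)| = (vI k p : ℝ) := by
  rw [vI, Nat.cast_natAbs]
  push_cast
  ring_nf

lemma MmultI (lam : ℕ → ℕ) (N k : ℕ) (hN : ∀ i, N ≤ i → lam i = 0) (t : ℕ) :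
    Mmult lam (k : ℝ) (t : ℝ) = ((Bf lam N).filter (fun p => vI k p = t)).card := by
  rw [Mmult, ← Set.ncard_coe_finset]
  congr 1
  ext p
  simp only [Set.mem_setOf_eq, Finset.coe_filter, mem_Bf]
  constructor
  · rintro ⟨h1, h2⟩
    have hp1 : p.1 < N := by
      by_contra hc
      rw [hN p.1 (by omega)] at h1; omega
    refine ⟨⟨hp1, h1⟩, ?_⟩
    rw [entryI] at h2
    exact_mod_cast h2
  · rintro ⟨⟨_, h1⟩, h2⟩
    refine ⟨h1, ?_⟩
    rw [entryI, h2]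

lemma vI_lt (lam : ℕ → ℕ) (N k : ℕ) (hA : Antitone lam) (p : ℕ × ℕ)
    (hp : p ∈ Bf lam N) : vI k p < N + lam 0 + k + 1 := by
  rw [mem_Bf] at hp
  have h2 : p.2 < lam 0 := lt_of_lt_of_le hp.2 (hA (Nat.zero_le _))
  have h1 := hp.1
  rw [vI]
  omega

def vH (k : ℕ) (p : ℕ × ℕ) : ℕ :=
  if 0 ≤ (p.1 : ℤ) - p.2 + k then ((p.1 : ℤ) - p.2 + k).natAbs
  else (-((p.1 : ℤ) - p.2 + k) - 1).natAbs

lemma entryH (k : ℕ) (p : ℕ × ℕ) :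
    |(p.1 : ℝ) - (p.2 : ℝ) + ((k : ℝ) + 1/2)| = (vH k p : ℝ) + 1/2 := by
  have hc : (p.1 : ℝ) - (p.2 : ℝ) + ((k : ℝ) + 1/2)
      = (((p.1 : ℤ) - p.2 + k : ℤ) : ℝ) + 1/2 := by push_cast; ring
  rw [hc, vH]
  set c : ℤ := (p.1 : ℤ) - p.2 + k with hcdef
  by_cases h : 0 ≤ c
  · rw [if_pos h]
    have h' : (0:ℝ) ≤ (c:ℝ) := by exact_mod_cast h
    rw [abs_of_nonneg (by linarith), Nat.cast_natAbs, abs_of_nonneg h]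
  · rw [if_neg h]
    have hc1 : c ≤ -1 := by omega
    have h' : (c:ℝ) ≤ -1 := by exact_mod_cast hc1
    rw [abs_of_neg (by linarith)]
    rw [Nat.cast_natAbs, abs_of_nonneg (by omega : (0:ℤ) ≤ -c - 1)]
    push_cast
    ring

lemma MmultH (lam : ℕ → ℕ) (N k : ℕ) (hN : ∀ i, N ≤ i → lam i = 0) (t : ℕ) :
    Mmult lam ((k : ℝ) + 1/2) ((t : ℝ) + 1/2)
      = ((Bf lam N).filter (fun p => vH k p = t)).card := by
  rw [Mmult, ← Set.ncard_coe_finset]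
  congr 1
  ext p
  simp only [Set.mem_setOf_eq, Finset.coe_filter, mem_Bf]
  constructor
  · rintro ⟨h1, h2⟩
    have hp1 : p.1 < N := by
      by_contra hc
      rw [hN p.1 (by omega)] at h1; omega
    refine ⟨⟨hp1, h1⟩, ?_⟩
    rw [entryH] at h2
    have : (vH k p : ℝ) = (t : ℝ) := by linarith
    exact_mod_cast this
  · rintro ⟨⟨_, h1⟩, h2⟩
    refine ⟨h1, ?_⟩
    rw [entryH, h2]

lemma vH_lt (lam : ℕ → ℕ) (N k : ℕ) (hA : Antitone lam) (p : ℕ × ℕ)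
    (hp : p ∈ Bf lam N) : vH k p < N + lam 0 + k + 1 := by
  rw [mem_Bf] at hp
  have h2 : p.2 < lam 0 := lt_of_lt_of_le hp.2 (hA (Nat.zero_le _))
  have h1 := hp.1
  rw [vH]
  split <;> omega

lemma count_fibers {v : ℕ × ℕ → ℕ} (s : Finset (ℕ × ℕ)) (NB : ℕ)
    (hv : ∀ p ∈ s, v p < NB) :
    s.card = ∑ t ∈ Finset.range NB, (s.filter (fun p => v p = t)).card :=
  Finset.card_eq_sum_card_fiberwise (fun p hp => Finset.mem_range.mpr (hv p hp))

lemma fiber_empty {v : ℕ × ℕ → ℕ} (s : Finset (ℕ × ℕ)) (NB : ℕ)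
    (hv : ∀ p ∈ s, v p < NB) (t : ℕ) (ht : NB ≤ t) :
    (s.filter (fun p => v p = t)).card = 0 := by
  rw [Finset.card_eq_zero, Finset.filter_eq_empty_iff]
  intro p hp h
  exact absurd (h ▸ hv p hp) (by omega)

/-! ### Identification of `Jpos` -/

lemma JposI (lam : ℕ → ℕ) (k : ℕ) (g : ℕ → ℕ) (NB K : ℕ) (hK : K = k - 1)
    (hKNB : K < NB)
    (hMg : ∀ t : ℕ, Mmult lam (k : ℝ) ((t : ℝ) + 1) = g t)
    (hg0 : ∀ t, NB ≤ t → g t = 0) :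
    Jpos lam (k : ℝ) = ↑((Sfin g K NB).image (fun t : ℕ => (t : ℝ) + 1)) := by
  have hMg' : ∀ t : ℕ, Mmult lam (k : ℝ) (((t : ℝ) + 1) + 1) = g (t+1) := by
    intro t
    convert hMg (t+1) using 2
    push_cast
    ring
  rw [Finset.coe_image]
  ext l
  simp only [Jpos, Set.mem_setOf_eq, Set.mem_image, Finset.mem_coe]
  constructor
  · rintro ⟨⟨c, hc⟩, hl, hcase⟩
    have hc' : l = (((k : ℤ) + c : ℤ) : ℝ) := by rw [hc]; push_cast; ring
    have hdpos : 0 < (k : ℤ) + c := by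
      by_contra hcon
      push_neg at hcon
      have h2 : ((k : ℤ) + c : ℝ) ≤ 0 := by exact_mod_cast hcon
      push_cast at h2
      rw [hc] at hl
      linarith
    set d : ℤ := (k : ℤ) + c with hd
    obtain ⟨t, ht⟩ : ∃ t : ℕ, d = (t : ℤ) + 1 := ⟨(d - 1).toNat, by omega⟩
    have hlt : l = (t : ℝ) + 1 := by rw [hc', ht]; push_cast; ring
    refine ⟨t, Finset.mem_filter.mpr ⟨Finset.mem_range.mpr ?_, ?_⟩, hlt.symm⟩
    · rcases hcase with ⟨hml, hdrop⟩ | ⟨hml, hflat⟩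
      · by_contra hcon
        push_neg at hcon
        rw [hlt, hMg t, hMg' t] at hdrop
        rw [hg0 t hcon, hg0 (t+1) (by omega)] at hdrop
        omega
      · have : (t : ℝ) + 1 ≤ (k : ℝ) - 1 := hlt ▸ hml
        have htk : t + 2 ≤ k := by exact_mod_cast (by linarith : ((t:ℝ) + 2) ≤ (k:ℝ))
        omega
    · rcases hcase with ⟨hml, hdrop⟩ | ⟨hml, hflat⟩
      · left
        have : (k : ℝ) ≤ (t : ℝ) + 1 := hlt ▸ hml
        have htk : k ≤ t + 1 := by exact_mod_cast (by linarith : ((k:ℝ)) ≤ ((t:ℕ):ℝ) + 1)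
        rw [hlt, hMg t, hMg' t] at hdrop
        exact ⟨by omega, hdrop⟩
      · right
        have : (t : ℝ) + 1 ≤ (k : ℝ) - 1 := hlt ▸ hml
        have htk : t + 2 ≤ k := by exact_mod_cast (by linarith : ((t:ℝ) + 2) ≤ (k:ℝ))
        rw [hlt, hMg t, hMg' t] at hflat
        exact ⟨by omega, hflat⟩
  · rintro ⟨t, htmem, rfl⟩
    rw [Sfin, Finset.mem_filter, Finset.mem_range] at htmem
    obtain ⟨htNB, hcond⟩ := htmem
    refine ⟨⟨(t : ℤ) + 1 - k, by push_cast; ring⟩, by positivity, ?_⟩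
    rcases hcond with ⟨hKt, hdrop⟩ | ⟨hKt, hflat⟩
    · left
      refine ⟨?_, by rw [hMg t, hMg' t]; exact hdrop⟩
      have : k ≤ t + 1 := by omega
      exact_mod_cast Nat.cast_le (α := ℝ) |>.mpr this
    · right
      refine ⟨?_, by rw [hMg t, hMg' t]; exact hflat⟩
      have : t + 2 ≤ k := by omega
      have := Nat.cast_le (α := ℝ) |>.mpr this
      push_cast at this
      linarith

lemma JposH (lam : ℕ → ℕ) (k : ℕ) (g : ℕ → ℕ) (NB : ℕ)
    (hKNB : k < NB)
    (hMg : ∀ t : ℕ, Mmult lam ((k : ℝ) + 1/2) ((t : ℝ) + 1/2) = g t)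
    (hg0 : ∀ t, NB ≤ t → g t = 0) :
    Jpos lam ((k : ℝ) + 1/2)
      = ↑((Sfin g k NB).image (fun t : ℕ => (t : ℝ) + 1/2)) := by
  have hMg' : ∀ t : ℕ, Mmult lam ((k : ℝ) + 1/2) (((t : ℝ) + 1/2) + 1) = g (t+1) := by
    intro t
    convert hMg (t+1) using 2
    push_cast
    ring
  rw [Finset.coe_image]
  ext l
  simp only [Jpos, Set.mem_setOf_eq, Set.mem_image, Finset.mem_coe]
  constructor
  · rintro ⟨⟨c, hc⟩, hl, hcase⟩
    have hc' : l = (((k : ℤ) + c : ℤ) : ℝ) + 1/2 := by rw [hc]; push_cast; ring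
    have hdpos : 0 ≤ (k : ℤ) + c := by
      by_contra hcon
      push_neg at hcon
      have hcon' : (k : ℤ) + c ≤ -1 := by omega
      have h2 : ((k : ℤ) + c : ℝ) ≤ -1 := by exact_mod_cast hcon'
      push_cast at h2
      rw [hc] at hl
      linarith
    set d : ℤ := (k : ℤ) + c with hd
    obtain ⟨t, ht⟩ : ∃ t : ℕ, d = (t : ℤ) := ⟨d.toNat, by omega⟩
    have hlt : l = (t : ℝ) + 1/2 := by rw [hc', ht]; push_cast; ring
    refine ⟨t, Finset.mem_filter.mpr ⟨Finset.mem_range.mpr ?_, ?_⟩, hlt.symm⟩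
    · rcases hcase with ⟨hml, hdrop⟩ | ⟨hml, hflat⟩
      · by_contra hcon
        push_neg at hcon
        rw [hlt, hMg t, hMg' t] at hdrop
        rw [hg0 t hcon, hg0 (t+1) (by omega)] at hdrop
        omega
      · have : (t : ℝ) + 1/2 ≤ (k : ℝ) + 1/2 - 1 := hlt ▸ hml
        have htk : t + 1 ≤ k := by exact_mod_cast (by linarith : ((t:ℝ) + 1) ≤ (k:ℝ))
        omega
    · rcases hcase with ⟨hml, hdrop⟩ | ⟨hml, hflat⟩
      · left
        have : (k : ℝ) + 1/2 ≤ (t : ℝ) + 1/2 := hlt ▸ hml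
        have htk : k ≤ t := by exact_mod_cast (by linarith : ((k:ℝ)) ≤ ((t:ℕ):ℝ))
        rw [hlt, hMg t, hMg' t] at hdrop
        exact ⟨htk, hdrop⟩
      · right
        have : (t : ℝ) + 1/2 ≤ (k : ℝ) + 1/2 - 1 := hlt ▸ hml
        have htk : t + 1 ≤ k := by exact_mod_cast (by linarith : ((t:ℝ) + 1) ≤ (k:ℝ))
        rw [hlt, hMg t, hMg' t] at hflat
        exact ⟨by omega, hflat⟩
  · rintro ⟨t, htmem, rfl⟩
    rw [Sfin, Finset.mem_filter, Finset.mem_range] at htmem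
    obtain ⟨htNB, hcond⟩ := htmem
    refine ⟨⟨(t : ℤ) - k, by push_cast; ring⟩, by positivity, ?_⟩
    rcases hcond with ⟨hKt, hdrop⟩ | ⟨hKt, hflat⟩
    · left
      refine ⟨?_, by rw [hMg t, hMg' t]; exact hdrop⟩
      have := Nat.cast_le (α := ℝ) |>.mpr hKt
      linarith
    · right
      refine ⟨?_, by rw [hMg t, hMg' t]; exact hflat⟩
      have : t + 1 ≤ k := by omega
      have := Nat.cast_le (α := ℝ) |>.mpr this
      push_cast at this
      linarith

/-! ### Core computation, integer case -/

lemma intCore (lam : ℕ → ℕ) (n k K NB : ℕ) (g : ℕ → ℕ) (F0 : ℕ)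
    (hK : K = k - 1) (hKNB : K < NB)
    (hMg : ∀ t : ℕ, Mmult lam (k : ℝ) ((t : ℝ) + 1) = g t)
    (hg0 : ∀ t, NB ≤ t → g t = 0)
    (hdec : ∀ t, K ≤ t → g (t+1) ≤ g t ∧ g t ≤ g (t+1) + 1)
    (hinc : ∀ t, t < K → g t ≤ g (t+1) ∧ g (t+1) ≤ g t + 1)
    (hn : n = F0 + ∑ t ∈ Finset.range NB, g t)
    (hres3 : (k = 0 → F0 = (g 0 + 1)/2) ∧ (k ≠ 0 → F0 = g 0 / 2)) :
    ∑ᶠ j ∈ Jfull lam (k : ℝ), (2 * j + 1) = 2 * (n : ℝ) + (k : ℝ) ^ 2 := by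
  have hJ := JposI lam k g NB K hK hKNB hMg hg0
  have hgNB : g NB = 0 := hg0 NB le_rfl
  have hSsum := Sfin_sum g K NB hKNB.le hdec hinc hgNB
  have hScard := Sfin_card g K NB hKNB.le hdec hinc hgNB
  have hinj : Set.InjOn (fun t : ℕ => (t : ℝ) + 1) ↑(Sfin g K NB) := by
    intro a _ b _ h
    have h' : (a : ℝ) = b := by dsimp at h; linarith
    exact_mod_cast h'
  have hncard : (Set.ncard (Jpos lam (k : ℝ)) : ℤ) = K + g 0 := by
    rw [hJ, Set.ncard_coe_finset, Finset.card_image_of_injOn hinj]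
    exact_mod_cast hScard
  have hsumpos : ∑ᶠ j ∈ Jpos lam (k : ℝ), (2 * j + 1)
      = ((2 * (∑ t ∈ Finset.range NB, (g t : ℤ)) + K^2 + 2*K + g 0 : ℤ) : ℝ) := by
    rw [hJ, finsum_mem_coe_finset,
      Finset.sum_image (fun a ha b hb h => hinj (Finset.mem_coe.mpr ha)
        (Finset.mem_coe.mpr hb) h)]
    have h3 : ∑ t ∈ Sfin g K NB, (2 * ((t : ℝ) + 1) + 1)
        = ((∑ t ∈ Sfin g K NB, (2*(t:ℤ)+3) : ℤ) : ℝ) := by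
      push_cast
      exact Finset.sum_congr rfl fun t _ => by ring
    rw [h3]
    congr 1
    have h4 : (∑ t ∈ Sfin g K NB, (2*(t:ℤ)+3))
        = (∑ t ∈ Sfin g K NB, (2*(t:ℤ)+1)) + 2 * (Sfin g K NB).card := by
      rw [Finset.sum_congr rfl (fun t _ => by ring :
        ∀ t ∈ Sfin g K NB, (2*(t:ℤ)+3) = (2*(t:ℤ)+1) + 2), Finset.sum_add_distrib,
        Finset.sum_const]
      push_cast
      ring
    rw [h4, hSsum]
    linear_combination 2 * hScard
  have hnz : (n : ℤ) = F0 + ∑ t ∈ Finset.range NB, (g t : ℤ) := by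
    exact_mod_cast congrArg (fun x : ℕ => (x : ℤ)) hn
  rcases Nat.eq_zero_or_pos k with hk0 | hkpos
  · have hKeq : K = 0 := by omega
    have hF0 : F0 = (g 0 + 1)/2 := hres3.1 hk0
    have hK2 : (K : ℤ) = 0 := by exact_mod_cast hKeq
    have hkz : (k : ℤ) = 0 := by exact_mod_cast hk0
    rcases Nat.even_or_odd (g 0) with hpar | hpar
    · obtain ⟨r, hr⟩ := hpar
      have hcond : (Set.ncard (Jpos lam (k : ℝ)) : ℤ) % 2 = (⌈(k : ℝ)⌉ : ℤ) % 2 := by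
        rw [hncard, Int.ceil_natCast]
        omega
      simp only [Jfull]
      rw [if_pos hcond, hsumpos]
      have h2F0 : 2 * (F0 : ℤ) = g 0 := by omega
      have hnzR : (n:ℝ) = (F0:ℝ) + ∑ t ∈ Finset.range NB, (g t : ℝ) := by exact_mod_cast hnz
      have h2F0R : 2*(F0:ℝ) = (g 0 : ℝ) := by exact_mod_cast h2F0
      have hK2R : (K:ℝ) = 0 := by exact_mod_cast hK2
      have hkzR : (k:ℝ) = 0 := by exact_mod_cast hkz
      have hKsq : (K:ℝ)^2 = 0 := by rw [hK2R]; ring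
      have hksq : (k:ℝ)^2 = 0 := by rw [hkzR]; ring
      push_cast
      linarith [hnzR, h2F0R, hK2R, hkzR, hKsq, hksq]
    · obtain ⟨r, hr⟩ := hpar
      have hcond : ¬ ((Set.ncard (Jpos lam (k : ℝ)) : ℤ) % 2 = (⌈(k : ℝ)⌉ : ℤ) % 2) := by
        rw [hncard, Int.ceil_natCast]
        omega
      simp only [Jfull]
      rw [if_neg hcond]
      have h0notin : ((k : ℝ) - (⌈(k : ℝ)⌉ : ℤ)) ∉ Jpos lam (k : ℝ) := by
        rw [hJ, Int.ceil_natCast]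
        intro hmem
        rw [Finset.mem_coe, Finset.mem_image] at hmem
        obtain ⟨t, _, ht⟩ := hmem
        have : (t : ℝ) + 1 = 0 := by rw [ht]; push_cast; ring
        have ht0 : (0:ℝ) ≤ (t : ℝ) := Nat.cast_nonneg t
        linarith
      rw [finsum_mem_insert _ h0notin (by rw [hJ]; exact Finset.finite_toSet _), hsumpos]
      have h2F0 : 2 * (F0 : ℤ) = g 0 + 1 := by omega
      rw [Int.ceil_natCast]
      have hnzR : (n:ℝ) = (F0:ℝ) + ∑ t ∈ Finset.range NB, (g t : ℝ) := by exact_mod_cast hnz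
      have h2F0R : 2*(F0:ℝ) = (g 0 : ℝ) + 1 := by exact_mod_cast h2F0
      have hK2R : (K:ℝ) = 0 := by exact_mod_cast hK2
      have hkzR : (k:ℝ) = 0 := by exact_mod_cast hkz
      have hKsq : (K:ℝ)^2 = 0 := by rw [hK2R]; ring
      have hksq : (k:ℝ)^2 = 0 := by rw [hkzR]; ring
      push_cast
      linarith [hnzR, h2F0R, hK2R, hkzR, hKsq, hksq]
  · have hF0 : F0 = g 0 / 2 := hres3.2 (by omega)
    have hK2 : (K : ℤ) = (k : ℤ) - 1 := by omega
    rcases Nat.even_or_odd (g 0) with hpar | hpar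
    · obtain ⟨r, hr⟩ := hpar
      have hcond : ¬ ((Set.ncard (Jpos lam (k : ℝ)) : ℤ) % 2 = (⌈(k : ℝ)⌉ : ℤ) % 2) := by
        rw [hncard, Int.ceil_natCast]
        omega
      simp only [Jfull]
      rw [if_neg hcond]
      have h0notin : ((k : ℝ) - (⌈(k : ℝ)⌉ : ℤ)) ∉ Jpos lam (k : ℝ) := by
        rw [hJ, Int.ceil_natCast]
        intro hmem
        rw [Finset.mem_coe, Finset.mem_image] at hmem
        obtain ⟨t, _, ht⟩ := hmem
        have : (t : ℝ) + 1 = 0 := by rw [ht]; push_cast; ring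
        have ht0 : (0:ℝ) ≤ (t : ℝ) := Nat.cast_nonneg t
        linarith
      rw [finsum_mem_insert _ h0notin (by rw [hJ]; exact Finset.finite_toSet _), hsumpos]
      have h2F0 : 2 * (F0 : ℤ) = g 0 := by omega
      rw [Int.ceil_natCast]
      have hnzR : (n:ℝ) = (F0:ℝ) + ∑ t ∈ Finset.range NB, (g t : ℝ) := by exact_mod_cast hnz
      have h2F0R : 2*(F0:ℝ) = (g 0 : ℝ) := by exact_mod_cast h2F0
      have hK2R : (K:ℝ) = (k:ℝ) - 1 := by exact_mod_cast hK2
      have hKsq : (K:ℝ)^2 + 2*(K:ℝ) = (k:ℝ)^2 - 1 := by rw [hK2R]; ring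
      push_cast
      linarith [hnzR, h2F0R, hKsq]
    · obtain ⟨r, hr⟩ := hpar
      have hcond : (Set.ncard (Jpos lam (k : ℝ)) : ℤ) % 2 = (⌈(k : ℝ)⌉ : ℤ) % 2 := by
        rw [hncard, Int.ceil_natCast]
        omega
      simp only [Jfull]
      rw [if_pos hcond, hsumpos]
      have h2F0 : 2 * (F0 : ℤ) = g 0 - 1 := by omega
      have hnzR : (n:ℝ) = (F0:ℝ) + ∑ t ∈ Finset.range NB, (g t : ℝ) := by exact_mod_cast hnz
      have h2F0R : 2*(F0:ℝ) = (g 0 : ℝ) - 1 := by exact_mod_cast h2F0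
      have hK2R : (K:ℝ) = (k:ℝ) - 1 := by exact_mod_cast hK2
      have hKsq : (K:ℝ)^2 + 2*(K:ℝ) = (k:ℝ)^2 - 1 := by rw [hK2R]; ring
      push_cast
      linarith [hnzR, h2F0R, hKsq]

/-! ### Core computation, half-integer case -/

lemma halfCore (lam : ℕ → ℕ) (n k NB : ℕ) (g : ℕ → ℕ)
    (hKNB : k < NB)
    (hMg : ∀ t : ℕ, Mmult lam ((k : ℝ) + 1/2) ((t : ℝ) + 1/2) = g t)
    (hg0 : ∀ t, NB ≤ t → g t = 0)
    (hdec : ∀ t, k ≤ t → g (t+1) ≤ g t ∧ g t ≤ g (t+1) + 1)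
    (hinc : ∀ t, t < k → g t ≤ g (t+1) ∧ g (t+1) ≤ g t + 1)
    (hn : n = ∑ t ∈ Finset.range NB, g t) :
    ∑ᶠ j ∈ Jfull lam ((k : ℝ) + 1/2), (2 * j + 1)
      = 2 * (n : ℝ) + ((k : ℝ) + 1/2) ^ 2 - 1/4 := by
  have hJ := JposH lam k g NB hKNB hMg hg0
  have hgNB : g NB = 0 := hg0 NB le_rfl
  have hSsum := Sfin_sum g k NB hKNB.le hdec hinc hgNB
  have hScard := Sfin_card g k NB hKNB.le hdec hinc hgNB
  have hinj : Set.InjOn (fun t : ℕ => (t : ℝ) + 1/2) ↑(Sfin g k NB) := by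
    intro a _ b _ h
    have h' : (a : ℝ) = b := by dsimp at h; linarith
    exact_mod_cast h'
  have hsumpos : ∑ᶠ j ∈ Jpos lam ((k : ℝ) + 1/2), (2 * j + 1)
      = ((2 * (∑ t ∈ Finset.range NB, (g t : ℤ)) + k^2 + k : ℤ) : ℝ) := by
    rw [hJ, finsum_mem_coe_finset,
      Finset.sum_image (fun a ha b hb h => hinj (Finset.mem_coe.mpr ha)
        (Finset.mem_coe.mpr hb) h)]
    have h3 : ∑ t ∈ Sfin g k NB, (2 * ((t : ℝ) + 1/2) + 1)
        = ((∑ t ∈ Sfin g k NB, (2*(t:ℤ)+2) : ℤ) : ℝ) := by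
      push_cast
      exact Finset.sum_congr rfl fun t _ => by ring
    rw [h3]
    congr 1
    have h4 : (∑ t ∈ Sfin g k NB, (2*(t:ℤ)+2))
        = (∑ t ∈ Sfin g k NB, (2*(t:ℤ)+1)) + (Sfin g k NB).card := by
      rw [Finset.sum_congr rfl (fun t _ => by ring :
        ∀ t ∈ Sfin g k NB, (2*(t:ℤ)+2) = (2*(t:ℤ)+1) + 1), Finset.sum_add_distrib,
        Finset.sum_const]
      push_cast
      ring
    rw [h4, hSsum]
    linear_combination hScard
  have hnz : (n : ℤ) = ∑ t ∈ Finset.range NB, (g t : ℤ) := by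
    exact_mod_cast congrArg (fun x : ℕ => (x : ℤ)) hn
  have hnzR : (n:ℝ) = ∑ t ∈ Finset.range NB, (g t : ℝ) := by exact_mod_cast hnz
  have hfin : ∑ᶠ j ∈ Jpos lam ((k : ℝ) + 1/2), (2 * j + 1)
      = 2 * (n : ℝ) + ((k : ℝ) + 1/2) ^ 2 - 1/4 := by
    rw [hsumpos]
    push_cast
    linarith [hnzR]
  rw [Jfull]
  by_cases hsplit : (Set.ncard (Jpos lam ((k : ℝ) + 1/2)) : ℤ) % 2 = ⌈(k : ℝ) + 1/2⌉ % 2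
  · rw [if_pos hsplit]; exact hfin
  · rw [if_neg hsplit]
    have hceil : ⌈(k : ℝ) + 1/2⌉ = (k : ℤ) + 1 := by
      rw [Int.ceil_eq_iff]
      constructor
      · push_cast; linarith
      · push_cast; linarith
    have hnotin : ((k : ℝ) + 1/2 - (⌈(k : ℝ) + 1/2⌉ : ℤ)) ∉ Jpos lam ((k : ℝ) + 1/2) := by
      rw [hJ, hceil]
      intro hmem
      rw [Finset.mem_coe, Finset.mem_image] at hmem
      obtain ⟨t, _, ht⟩ := hmem
      have h5 : (t : ℝ) + 1/2 = -(1/2) := by rw [ht]; push_cast; ring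
      have ht0 : (0:ℝ) ≤ (t : ℝ) := Nat.cast_nonneg t
      linarith
    rw [finsum_mem_insert _ hnotin (by rw [hJ]; exact Finset.finite_toSet _), hfin, hceil]
    push_cast
    ring

/-! ### Assembly -/

lemma intCase (n k : ℕ) (lam : ℕ → ℕ) (hlam : IsPartitionOf lam n)
    (hres : Residual lam (k : ℝ)) :
    ∑ᶠ j ∈ Jfull lam (k : ℝ), (2 * j + 1) = 2 * (n : ℝ) + (k : ℝ) ^ 2 := by
  obtain ⟨hA, N, hN, hsum⟩ := hlam
  set NB := N + lam 0 + k + 2 with hNBdef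
  have hv : ∀ p ∈ Bf lam N, vI k p < NB := fun p hp => by
    have := vI_lt lam N k hA p hp; omega
  set F : ℕ → ℕ := fun t => ((Bf lam N).filter (fun p => vI k p = t)).card with hFdef
  have hMF : ∀ t : ℕ, Mmult lam (k : ℝ) (t : ℝ) = F t := fun t => MmultI lam N k hN t
  have hFvan : ∀ t, NB ≤ t → F t = 0 := fun t ht => fiber_empty _ NB hv t ht
  set g : ℕ → ℕ := fun t => F (t+1) with hgdef
  have hMg : ∀ t : ℕ, Mmult lam (k : ℝ) ((t : ℝ) + 1) = g t := by
    intro t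
    have h := hMF (t+1)
    push_cast at h
    exact h
  have hMg' : ∀ t : ℕ, Mmult lam (k : ℝ) (((t : ℝ) + 1) + 1) = g (t+1) := by
    intro t
    convert hMg (t+1) using 2
    push_cast
    ring
  have hg0 : ∀ t, NB ≤ t → g t = 0 := fun t ht => hFvan (t+1) (by omega)
  have hdec : ∀ t, k - 1 ≤ t → g (t+1) ≤ g t ∧ g t ≤ g (t+1) + 1 := by
    intro t ht
    have hk1 : k ≤ t + 1 := by omega
    have h := hres.1 ((t : ℝ) + 1) ⟨(t : ℤ) + 1 - k, by push_cast; ring⟩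
      (by positivity)
      (by exact_mod_cast Nat.cast_le (α := ℝ) |>.mpr hk1)
    rw [hMg t, hMg' t] at h
    exact h
  have hinc : ∀ t, t < k - 1 → g t ≤ g (t+1) ∧ g (t+1) ≤ g t + 1 := by
    intro t ht
    have hk1 : t + 2 ≤ k := by omega
    have hk1' : (t : ℝ) + 1 ≤ (k : ℝ) - 1 := by
      have := Nat.cast_le (α := ℝ) |>.mpr hk1
      push_cast at this
      linarith
    have h := hres.2.1 ((t : ℝ) + 1) ⟨(t : ℤ) + 1 - k, by push_cast; ring⟩
      (by positivity) hk1'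
    rw [hMg t, hMg' t] at h
    exact h
  have hn : n = F 0 + ∑ t ∈ Finset.range NB, g t := by
    have h1 := count_fibers (v := vI k) (Bf lam N) (NB+1)
      (fun p hp => Nat.lt_succ_of_lt (hv p hp))
    rw [card_Bf, hsum, Finset.sum_range_succ'] at h1
    rw [h1]
    ring
  have hM0 : Mmult lam (k : ℝ) 0 = F 0 := by
    have h := hMF 0
    push_cast at h
    exact h
  have hM1 : Mmult lam (k : ℝ) 1 = g 0 := by
    have h := hMg 0
    norm_num at h
    exact h
  have hres3' := hres.2.2 ⟨(k : ℤ), by push_cast; ring⟩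
  have hres3 : (k = 0 → F 0 = (g 0 + 1)/2) ∧ (k ≠ 0 → F 0 = g 0 / 2) := by
    constructor
    · intro hk0
      have h := hres3'.1 (by rw [hk0]; norm_num)
      rw [hM0, hM1] at h
      exact h
    · intro hk0
      have h := hres3'.2 (Nat.cast_ne_zero.mpr hk0)
      rw [hM0, hM1] at h
      exact h
  exact intCore lam n k (k-1) NB g (F 0) rfl (by omega) hMg hg0 hdec hinc hn hres3

lemma halfCase (n k : ℕ) (lam : ℕ → ℕ) (hlam : IsPartitionOf lam n)
    (hres : Residual lam ((k : ℝ) + 1/2)) :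
    ∑ᶠ j ∈ Jfull lam ((k : ℝ) + 1/2), (2 * j + 1)
      = 2 * (n : ℝ) + ((k : ℝ) + 1/2) ^ 2 - 1/4 := by
  obtain ⟨hA, N, hN, hsum⟩ := hlam
  set NB := N + lam 0 + k + 2 with hNBdef
  have hv : ∀ p ∈ Bf lam N, vH k p < NB := fun p hp => by
    have := vH_lt lam N k hA p hp; omega
  set g : ℕ → ℕ := fun t => ((Bf lam N).filter (fun p => vH k p = t)).card with hgdef
  have hMg : ∀ t : ℕ, Mmult lam ((k : ℝ) + 1/2) ((t : ℝ) + 1/2) = g t :=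
    fun t => MmultH lam N k hN t
  have hMg' : ∀ t : ℕ, Mmult lam ((k : ℝ) + 1/2) (((t : ℝ) + 1/2) + 1) = g (t+1) := by
    intro t
    convert hMg (t+1) using 2
    push_cast
    ring
  have hg0 : ∀ t, NB ≤ t → g t = 0 := fun t ht => fiber_empty _ NB hv t ht
  have hdec : ∀ t, k ≤ t → g (t+1) ≤ g t ∧ g t ≤ g (t+1) + 1 := by
    intro t ht
    have h := hres.1 ((t : ℝ) + 1/2) ⟨(t : ℤ) - k, by push_cast; ring⟩
      (by positivity)
      (by
        have := Nat.cast_le (α := ℝ) |>.mpr ht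
        linarith)
    rw [hMg t, hMg' t] at h
    exact h
  have hinc : ∀ t, t < k → g t ≤ g (t+1) ∧ g (t+1) ≤ g t + 1 := by
    intro t ht
    have hk1 : t + 1 ≤ k := by omega
    have hk1' : (t : ℝ) + 1/2 ≤ ((k : ℝ) + 1/2) - 1 := by
      have := Nat.cast_le (α := ℝ) |>.mpr hk1
      push_cast at this
      linarith
    have h := hres.2.1 ((t : ℝ) + 1/2) ⟨(t : ℤ) - k, by push_cast; ring⟩
      (by positivity) hk1'
    rw [hMg t, hMg' t] at h
    exact h
  have hn : n = ∑ t ∈ Finset.range NB, g t := by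
    have h1 := count_fibers (v := vH k) (Bf lam N) NB hv
    rw [card_Bf, hsum] at h1
    exact h1
  exact halfCore lam n k NB g (by omega) hMg hg0 hdec hinc hn


/-- for `m ≥ 0` with `2m ∈ ℤ` and a nonempty partition `lam` of
`n` whose `m`-tableau is residual, the full jump set `J` satisfies
`Σ_{j ∈ J} (2j + 1) = 2n + m²` when `m ∈ ℤ`, and `= 2n + m² - 1/4` when `m`
is a half-integer. -/
theorem stmt7 (n : ℕ) (hn : 1 ≤ n) (m : ℝ) (hm0 : 0 ≤ m)
    (h2m : ∃ c : ℤ, 2 * m = (c : ℝ))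
    (lam : ℕ → ℕ) (hlam : IsPartitionOf lam n) (hres : Residual lam m) :
    ((∃ c : ℤ, m = (c : ℝ)) →
      ∑ᶠ j ∈ Jfull lam m, (2 * j + 1) = 2 * (n : ℝ) + m ^ 2) ∧
    ((¬ ∃ c : ℤ, m = (c : ℝ)) →
      ∑ᶠ j ∈ Jfull lam m, (2 * j + 1) = 2 * (n : ℝ) + m ^ 2 - 1/4) := by
  obtain ⟨c, hc⟩ := h2m
  have hc0 : 0 ≤ c := by
    by_contra hcon
    push_neg at hcon
    have : (c : ℝ) ≤ -1 := by exact_mod_cast (by omega : c ≤ -1)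
    linarith
  rcases Int.even_or_odd c with ⟨r, hr⟩ | ⟨r, hr⟩
  · -- m = r, integer
    have hr0 : 0 ≤ r := by omega
    set k : ℕ := r.toNat with hkdef
    have hkr : (k : ℤ) = r := Int.toNat_of_nonneg hr0
    have hm : m = (k : ℝ) := by
      have h1 : (2 : ℝ) * m = ((r + r : ℤ) : ℝ) := by rw [← hr]; exact_mod_cast hc
      have h2 : ((r + r : ℤ) : ℝ) = 2 * (k : ℝ) := by
        rw [← hkr]; push_cast; ring
      linarith [h1, h2.symm ▸ h1]
    subst hm
    constructor
    · intro _
      exact intCase n k lam hlam hres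
    · intro hcon
      exact absurd ⟨(k : ℤ), by push_cast; ring⟩ hcon
  · -- m = r + 1/2, half-integer
    have hr0 : 0 ≤ r := by omega
    set k : ℕ := r.toNat with hkdef
    have hkr : (k : ℤ) = r := Int.toNat_of_nonneg hr0
    have hm : m = (k : ℝ) + 1/2 := by
      have h1 : (2 : ℝ) * m = ((2 * r + 1 : ℤ) : ℝ) := by rw [← hr]; exact_mod_cast hc
      have h2 : ((2 * r + 1 : ℤ) : ℝ) = 2 * ((k : ℝ) + 1/2) := by
        rw [← hkr]; push_cast; ring
      linarith
    subst hm
    constructor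
    · rintro ⟨c', hc'⟩
      exfalso
      have h1 : (2 * c' : ℤ) = ((2 * k + 1 : ℤ)) := by
        have : (2 * (c' : ℝ)) = 2 * ((k : ℝ) + 1/2) := by rw [← hc']
        have h2 : ((2 * c' : ℤ) : ℝ) = ((2 * k + 1 : ℤ) : ℝ) := by push_cast; linarith
        exact_mod_cast h2
      omega
    · intro _
      exact halfCase n k lam hlam hres
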